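/- Let a, b, c be real numbers with a² + b² < c². Then for all (x,y) ∈ ℝ², the point F_{a,b,c}(x,y) ∈ ℂ³ ≅ ℝ⁶ has Euclidean norm 1; that is, ((b²+c²−a²)/(2(c²−a²))) sin²y + ((a²+c²−b²)/(2(c²−b²))) cos²y + ((c²−a²−b²)/(2(c²−b²)))·(1 − ((b²−a²)/(c²−a²)) sin²y) = 1, so the image of F_{a,b,c} lies in the unit sphere S⁵. -/

import Mathlib

open Real

/-- The generalized Lawson immersion `F_{a,b,c} : ℝ² → ℂ³ ≅ ℝ⁶`, whose image (for
suitable integers `a`, `b`, `c`) is the generalized Lawson surface `T_{a,b,c}`. -/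
noncomputable def genLawson (a b c : ℝ) : ℝ × ℝ → EuclideanSpace ℝ (Fin 6) := fun p =>
  WithLp.toLp 2 (![Real.sqrt ((b^2 + c^2 - a^2) / (2 * (c^2 - a^2))) * Real.cos (a * p.1) * Real.sin p.2,
    Real.sqrt ((b^2 + c^2 - a^2) / (2 * (c^2 - a^2))) * Real.sin (a * p.1) * Real.sin p.2,
    Real.sqrt ((a^2 + c^2 - b^2) / (2 * (c^2 - b^2))) * Real.cos (b * p.1) * Real.cos p.2,
    Real.sqrt ((a^2 + c^2 - b^2) / (2 * (c^2 - b^2))) * Real.sin (b * p.1) * Real.cos p.2,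
    Real.sqrt ((c^2 - a^2 - b^2) / (2 * (c^2 - b^2))) * Real.cos (c * p.1) *
      Real.sqrt (1 - (b^2 - a^2) / (c^2 - a^2) * Real.sin p.2 ^ 2),
    Real.sqrt ((c^2 - a^2 - b^2) / (2 * (c^2 - b^2))) * Real.sin (c * p.1) *
      Real.sqrt (1 - (b^2 - a^2) / (c^2 - a^2) * Real.sin p.2 ^ 2)])

theorem vec6_val_five {α : Type*} (x0 x1 x2 x3 x4 x5 : α) :
    ![x0, x1, x2, x3, x4, x5] 5 = x5 := rfl

/-- For `a² + b² < c²`, every point `F_{a,b,c}(x,y)` has Euclidean norm 1, that is,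
`((b²+c²−a²)/(2(c²−a²)))sin²y + ((a²+c²−b²)/(2(c²−b²)))cos²y
+ ((c²−a²−b²)/(2(c²−b²)))(1 − ((b²−a²)/(c²−a²))sin²y) = 1`:
the image of `F_{a,b,c}` lies in the unit sphere `S⁵`. -/
theorem genLawson_mem_sphere (a b c : ℝ) (h : a^2 + b^2 < c^2) (x y : ℝ) :
    ‖genLawson a b c (x, y)‖ = 1 ∧
    (b^2 + c^2 - a^2) / (2 * (c^2 - a^2)) * Real.sin y ^ 2
      + (a^2 + c^2 - b^2) / (2 * (c^2 - b^2)) * Real.cos y ^ 2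
      + (c^2 - a^2 - b^2) / (2 * (c^2 - b^2))
          * (1 - (b^2 - a^2) / (c^2 - a^2) * Real.sin y ^ 2) = 1 := by
  have hca : (0:ℝ) < c^2 - a^2 := by nlinarith [sq_nonneg b]
  have hcb : (0:ℝ) < c^2 - b^2 := by nlinarith [sq_nonneg a]
  have hs2 : Real.cos y ^ 2 = 1 - Real.sin y ^ 2 := by
    have := Real.sin_sq_add_cos_sq y; linarith
  have hkey : (b^2 + c^2 - a^2) / (2 * (c^2 - a^2)) * Real.sin y ^ 2
      + (a^2 + c^2 - b^2) / (2 * (c^2 - b^2)) * Real.cos y ^ 2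
      + (c^2 - a^2 - b^2) / (2 * (c^2 - b^2))
          * (1 - (b^2 - a^2) / (c^2 - a^2) * Real.sin y ^ 2) = 1 := by
    rw [hs2]
    field_simp
    ring
  refine ⟨?_, hkey⟩
  have hA : (0:ℝ) ≤ (b^2 + c^2 - a^2) / (2 * (c^2 - a^2)) := by
    apply div_nonneg _ (by linarith); nlinarith [sq_nonneg b]
  have hB : (0:ℝ) ≤ (a^2 + c^2 - b^2) / (2 * (c^2 - b^2)) := by
    apply div_nonneg _ (by linarith); nlinarith [sq_nonneg a]
  have hC : (0:ℝ) ≤ (c^2 - a^2 - b^2) / (2 * (c^2 - b^2)) := by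
    apply div_nonneg _ (by linarith); linarith
  have hss : Real.sin y ^ 2 ≤ 1 := Real.sin_sq_le_one y
  have hs0 : (0:ℝ) ≤ Real.sin y ^ 2 := sq_nonneg _
  have hE : (0:ℝ) ≤ 1 - (b^2 - a^2) / (c^2 - a^2) * Real.sin y ^ 2 := by
    rw [div_mul_eq_mul_div, sub_nonneg, div_le_one hca]
    nlinarith
  rw [EuclideanSpace.norm_eq]
  have : ∑ i : Fin 6, ‖genLawson a b c (x, y) i‖ ^ 2 = 1 := by
    simp only [genLawson, PiLp.toLp_apply, Fin.sum_univ_six, Real.norm_eq_abs, sq_abs,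
      Matrix.cons_val_zero, Matrix.cons_val_one, Matrix.head_cons,
      Matrix.cons_val_two, Matrix.tail_cons, Matrix.cons_val_three,
      Matrix.cons_val_four, vec6_val_five]
    have e1 := Real.sq_sqrt hA
    have e2 := Real.sq_sqrt hB
    have e3 := Real.sq_sqrt hC
    have e4 := Real.sq_sqrt hE
    have p1 := Real.sin_sq_add_cos_sq (a * x)
    have p2 := Real.sin_sq_add_cos_sq (b * x)
    have p3 := Real.sin_sq_add_cos_sq (c * x)
    simp only [mul_pow, e1, e2, e3, e4]
    linear_combination ((b^2 + c^2 - a^2) / (2 * (c^2 - a^2)) * Real.sin y ^ 2) * p1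
      + ((a^2 + c^2 - b^2) / (2 * (c^2 - b^2)) * Real.cos y ^ 2) * p2
      + ((c^2 - a^2 - b^2) / (2 * (c^2 - b^2))
          * (1 - (b^2 - a^2) / (c^2 - a^2) * Real.sin y ^ 2)) * p3 + hkey
  rw [this, Real.sqrt_one]
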